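/- For nonempty compact sets A, B ⊆ ℝ with |A + B| > 0, equality |A + B| = |A| + |B| holds if and only if either exactly one of A, B is a single point and the other has positive measure, or both A and B are intervals of positive measure. -/

import Mathlib

open MeasureTheory Pointwise Set

private lemma vol_shift (t : ℝ) (s : Set ℝ) :
    volume ((fun x => x - t) ⁻¹' s) = volume s := by
  simp [sub_eq_add_neg]

private lemma meas_shift (t : ℝ) {s : Set ℝ} (hs : MeasurableSet s) :
    MeasurableSet ((fun x => x - t) ⁻¹' s) :=
  hs.preimage (measurable_sub_const t)

private lemma shift_null (B : Set ℝ) (hBc : IsCompact B) (hBpos : 0 < volume B)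
    (t : ℝ) (ht : 0 < t) (h : volume (B \ (fun x => x + t) ⁻¹' B) = 0) : False := by
  have hB : B.Nonempty := nonempty_of_measure_ne_zero hBpos.ne'
  have key : ∀ n : ℕ, volume (B \ (fun x => x + ((n : ℝ) + 1) * t) ⁻¹' B) = 0 := by
    intro n
    induction n with
    | zero => simpa using h
    | succ n ih =>
      simp only [Nat.cast_succ]
      have hsub : B \ (fun x => x + ((n : ℝ) + 1 + 1) * t) ⁻¹' B ⊆
          (B \ (fun x => x + t) ⁻¹' B) ∪
          ((fun x => x + t) ⁻¹' (B \ (fun x => x + ((n : ℝ) + 1) * t) ⁻¹' B)) := by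
        rintro x ⟨hxB, hx2⟩
        by_cases h1 : x + t ∈ B
        · right
          refine ⟨h1, fun hc => hx2 ?_⟩
          simp only [mem_preimage] at hc ⊢
          have e : x + t + ((n : ℝ) + 1) * t = x + ((n : ℝ) + 1 + 1) * t := by ring
          rwa [e] at hc
        · left; exact ⟨hxB, h1⟩
      have h2 : volume ((fun x => x + t) ⁻¹' (B \ (fun x => x + ((n : ℝ) + 1) * t) ⁻¹' B)) = 0 := by
        rw [measure_preimage_add_right]; exact ih
      have := (measure_mono (μ := volume) hsub).trans (measure_union_le _ _)
      rw [h, h2] at this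
      rw [add_zero] at this
      exact le_antisymm this zero_le
  set b₀ := sInf B
  set b₁ := sSup B
  obtain ⟨n, hn⟩ := exists_nat_gt ((b₁ - b₀) / t)
  have hnt : b₁ - b₀ < ((n : ℝ) + 1) * t := by
    have : b₁ - b₀ < (n : ℝ) * t := by
      rw [div_lt_iff₀ ht] at hn; linarith
    nlinarith
  have hempty : B ⊆ B \ (fun x => x + ((n : ℝ) + 1) * t) ⁻¹' B := by
    intro x hx
    refine ⟨hx, fun hc => ?_⟩
    simp only [mem_preimage] at hc
    have h1 : b₀ ≤ x := csInf_le hBc.bddBelow hx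
    have h2 : x + ((n : ℝ) + 1) * t ≤ b₁ := le_csSup hBc.bddAbove hc
    linarith
  have := (measure_mono (μ := volume) hempty).trans_eq (key n)
  exact absurd (le_antisymm this zero_le) hBpos.ne'

private lemma two_pts_aux (A B : Set ℝ) (hAc : IsCompact A) (hBc : IsCompact B)
    (hBpos : 0 < volume B) (hvolAB : volume (A + B) = volume B)
    (p q : ℝ) (hp : p ∈ A) (hq : q ∈ A) (hpq : p < q) : False := by
  have hBm : MeasurableSet B := hBc.isClosed.measurableSet
  have hBfin : volume B ≠ ⊤ := hBc.measure_lt_top.ne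
  set S : Set ℝ := (fun x => x - p) ⁻¹' B with hS
  set S' : Set ℝ := (fun x => x - q) ⁻¹' B with hS'
  have hSsub : S ⊆ A + B := by
    intro x hx
    have : p + (x - p) ∈ A + B := Set.add_mem_add hp hx
    simpa using this
  have hS'sub : S' ⊆ A + B := by
    intro x hx
    have : q + (x - q) ∈ A + B := Set.add_mem_add hq hx
    simpa using this
  have hui : volume (S ∪ S') + volume (S ∩ S') = volume B + volume B := by
    rw [measure_union_add_inter S (meas_shift q hBm), vol_shift, vol_shift]
  have hle : volume (S ∪ S') ≤ volume B := by
    rw [← hvolAB]; exact measure_mono (union_subset hSsub hS'sub)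
  have hinter : volume B ≤ volume (S ∩ S') := by
    have : volume B + volume B ≤ volume B + volume (S ∩ S') := by
      rw [← hui]; exact add_le_add_left hle _
    exact (ENNReal.add_le_add_iff_left hBfin).mp this
  -- rewrite S ∩ S' as a translate of B ∩ (· + (q - p)) ⁻¹' B
  have hSS : S ∩ S' = (fun x => x - q) ⁻¹' (B ∩ (fun y => y + (q - p)) ⁻¹' B) := by
    ext z
    simp only [hS, hS', mem_inter_iff, mem_preimage]
    constructor
    · rintro ⟨h1, h2⟩
      refine ⟨h2, ?_⟩
      have e : z - q + (q - p) = z - p := by ring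
      rwa [e]
    · rintro ⟨h1, h2⟩
      have e : z - q + (q - p) = z - p := by ring
      rw [e] at h2
      exact ⟨h2, h1⟩
  have hint2 : volume B ≤ volume (B ∩ (fun y => y + (q - p)) ⁻¹' B) := by
    rwa [hSS, vol_shift] at hinter
  have hdiff : volume (B \ (fun y => y + (q - p)) ⁻¹' B) = 0 := by
    have hmp : MeasurableSet ((fun y => y + (q - p)) ⁻¹' B) :=
      hBm.preimage (measurable_add_const _)
    have hid := measure_inter_add_diff (μ := volume) B hmp
    have hfin2 : volume (B ∩ (fun y => y + (q - p)) ⁻¹' B) ≠ ⊤ :=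
      ((measure_mono inter_subset_left).trans_lt hBc.measure_lt_top).ne
    have h3 : volume (B ∩ (fun y => y + (q - p)) ⁻¹' B) + volume (B \ (fun y => y + (q - p)) ⁻¹' B)
        ≤ volume (B ∩ (fun y => y + (q - p)) ⁻¹' B) + 0 := by
      rw [add_zero, hid]; exact hint2
    exact le_antisymm ((ENNReal.add_le_add_iff_left hfin2).mp h3) zero_le
  exact shift_null B hBc hBpos (q - p) (by linarith) hdiff

private lemma gap_null (A B : Set ℝ) (hB : B.Nonempty) (hAc : IsCompact A) (hBc : IsCompact B)
    (c d : ℝ) (hc : c ∈ A) (hd : d ∈ A) (hcd : c < d) (hgap : A ∩ Ioo c d = ∅)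
    (heq : volume (A + B) = volume A + volume B) : volume B = 0 := by
  have hAm : MeasurableSet A := hAc.isClosed.measurableSet
  have hBm : MeasurableSet B := hBc.isClosed.measurableSet
  set b₀ := sInf B with hb₀def
  set b₁ := sSup B with hb₁def
  have hb₀B : b₀ ∈ B := hBc.sInf_mem hB
  have hb₁B : b₁ ∈ B := hBc.sSup_mem hB
  have hb₀ : ∀ x ∈ B, b₀ ≤ x := fun x hx => csInf_le hBc.bddBelow hx
  have hb₁ : ∀ x ∈ B, x ≤ b₁ := fun x hx => le_csSup hBc.bddAbove hx
  set g := d - c with hgdef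
  have hg0 : 0 < g := by simp [hgdef]; linarith
  have key : ∀ β : ℝ, volume (B ∩ Ioc (β - g) β) = 0 := by
    intro β
    set S₁ : Set ℝ := (fun x => x - b₀) ⁻¹' (A ∩ Iic c) with hS₁
    set S₂ : Set ℝ := (fun x => x - c) ⁻¹' (B ∩ Ioc b₀ β) with hS₂
    set S₃ : Set ℝ := (fun x => x - d) ⁻¹' (B ∩ Ioo (β - g) b₁) with hS₃
    set S₄ : Set ℝ := (fun x => x - b₁) ⁻¹' (A ∩ Ici d) with hS₄
    -- subsets of A + B
    have hsub1 : S₁ ⊆ A + B := by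
      intro x hx
      have : (x - b₀) + b₀ ∈ A + B := Set.add_mem_add hx.1 hb₀B
      simpa using this
    have hsub2 : S₂ ⊆ A + B := by
      intro x hx
      have : c + (x - c) ∈ A + B := Set.add_mem_add hc hx.1
      simpa using this
    have hsub3 : S₃ ⊆ A + B := by
      intro x hx
      have : d + (x - d) ∈ A + B := Set.add_mem_add hd hx.1
      simpa using this
    have hsub4 : S₄ ⊆ A + B := by
      intro x hx
      have : (x - b₁) + b₁ ∈ A + B := Set.add_mem_add hx.1 hb₁B
      simpa using this
    -- pairwise disjoint
    have d12 : Disjoint S₁ S₂ := by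
      rw [Set.disjoint_left]
      intro x h h'
      simp only [hS₁, hS₂, mem_preimage, mem_inter_iff, mem_Iic, mem_Ioc] at h h'
      linarith [h.2, h'.2.1]
    have d13 : Disjoint S₁ S₃ := by
      rw [Set.disjoint_left]
      intro x h h'
      simp only [hS₁, hS₃, mem_preimage, mem_inter_iff, mem_Iic, mem_Ioo] at h h'
      have := hb₀ _ h'.1
      linarith [h.2]
    have d14 : Disjoint S₁ S₄ := by
      rw [Set.disjoint_left]
      intro x h h'
      simp only [hS₁, hS₄, mem_preimage, mem_inter_iff, mem_Iic, mem_Ici] at h h'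
      have := hb₀ _ hb₁B
      linarith [h.2, h'.2]
    have d23 : Disjoint S₂ S₃ := by
      rw [Set.disjoint_left]
      intro x h h'
      simp only [hS₂, hS₃, mem_preimage, mem_inter_iff, mem_Ioc, mem_Ioo] at h h'
      have hge : g = d - c := hgdef
      linarith [h.2.2, h'.2.1]
    have d24 : Disjoint S₂ S₄ := by
      rw [Set.disjoint_left]
      intro x h h'
      simp only [hS₂, hS₄, mem_preimage, mem_inter_iff, mem_Ioc, mem_Ici] at h h'
      have := hb₁ _ h.1
      linarith [h'.2]
    have d34 : Disjoint S₃ S₄ := by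
      rw [Set.disjoint_left]
      intro x h h'
      simp only [hS₃, hS₄, mem_preimage, mem_inter_iff, mem_Ioo, mem_Ici] at h h'
      linarith [h.2.2, h'.2]
    -- measurability
    have m1 : MeasurableSet S₁ := meas_shift _ (hAm.inter measurableSet_Iic)
    have m2 : MeasurableSet S₂ := meas_shift _ (hBm.inter measurableSet_Ioc)
    have m3 : MeasurableSet S₃ := meas_shift _ (hBm.inter measurableSet_Ioo)
    have m4 : MeasurableSet S₄ := meas_shift _ (hAm.inter measurableSet_Ici)
    -- measure of the union
    have hvol_union : volume (S₁ ∪ S₂ ∪ S₃ ∪ S₄)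
        = volume (A ∩ Iic c) + volume (B ∩ Ioc b₀ β) + volume (B ∩ Ioo (β - g) b₁)
          + volume (A ∩ Ici d) := by
      rw [measure_union (by
            exact ((d14.union_left d24).union_left d34)) m4,
          measure_union (d13.union_left d23) m3,
          measure_union d12 m2,
          hS₁, hS₂, hS₃, hS₄, vol_shift, vol_shift, vol_shift, vol_shift]
    have hunion_le : volume (S₁ ∪ S₂ ∪ S₃ ∪ S₄) ≤ volume (A + B) :=
      measure_mono (union_subset (union_subset (union_subset hsub1 hsub2) hsub3) hsub4)
    -- A splits
    have hAsplit : volume (A ∩ Iic c) + volume (A ∩ Ici d) = volume A := by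
      rw [← measure_union (by
            rw [Set.disjoint_left]
            rintro x ⟨-, h1⟩ ⟨-, h2⟩
            simp only [mem_Iic] at h1
            simp only [mem_Ici] at h2
            linarith) (hAm.inter measurableSet_Ici)]
      congr 1
      ext x
      simp only [mem_union, mem_inter_iff, mem_Iic, mem_Ici]
      constructor
      · rintro (⟨h, -⟩ | ⟨h, -⟩) <;> exact h
      · intro hx
        rcases le_or_gt x c with h | h
        · exact Or.inl ⟨hx, h⟩
        rcases le_or_gt d x with h' | h'
        · exact Or.inr ⟨hx, h'⟩
        exact absurd (Set.eq_empty_iff_forall_notMem.mp hgap x ⟨hx, h, h'⟩) (fun t => t)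
    -- B counting with inclusion–exclusion
    have hBsplit : volume (B ∩ Iic β) + volume (B ∩ Ioi (β - g))
        = volume B + volume (B ∩ Ioc (β - g) β) := by
      have := measure_union_add_inter (μ := volume) (t := B ∩ Ioi (β - g)) (B ∩ Iic β) (hBm.inter measurableSet_Ioi)
      have e1 : B ∩ Iic β ∪ B ∩ Ioi (β - g) = B := by
        ext x
        simp only [mem_union, mem_inter_iff, mem_Iic, mem_Ioi]
        constructor
        · rintro (⟨h, -⟩ | ⟨h, -⟩) <;> exact h
        · intro hx
          rcases le_or_gt x β with h | h
          · exact Or.inl ⟨hx, h⟩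
          · exact Or.inr ⟨hx, by linarith⟩
      have e2 : (B ∩ Iic β) ∩ (B ∩ Ioi (β - g)) = B ∩ Ioc (β - g) β := by
        ext x
        simp only [mem_inter_iff, mem_Iic, mem_Ioi, mem_Ioc]
        tauto
      rw [e1, e2] at this
      exact this.symm
    -- boundary point adjustments
    have h2b : volume (B ∩ Iic β) ≤ volume (B ∩ Ioc b₀ β) := by
      have hsub : B ∩ Iic β ⊆ (B ∩ Ioc b₀ β) ∪ {b₀} := by
        rintro x ⟨hxB, hxβ⟩
        rcases eq_or_lt_of_le (hb₀ _ hxB) with h | h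
        · exact Or.inr (by simp [← h])
        · exact Or.inl ⟨hxB, h, hxβ⟩
      calc volume (B ∩ Iic β) ≤ volume (B ∩ Ioc b₀ β) + volume ({b₀} : Set ℝ) :=
            (measure_mono hsub).trans (measure_union_le _ _)
        _ = volume (B ∩ Ioc b₀ β) := by rw [Real.volume_singleton, add_zero]
    have h3b : volume (B ∩ Ioi (β - g)) ≤ volume (B ∩ Ioo (β - g) b₁) := by
      have hsub : B ∩ Ioi (β - g) ⊆ (B ∩ Ioo (β - g) b₁) ∪ {b₁} := by
        rintro x ⟨hxB, hx⟩
        rcases eq_or_lt_of_le (hb₁ _ hxB) with h | h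
        · exact Or.inr (by simp [h])
        · exact Or.inl ⟨hxB, hx, h⟩
      calc volume (B ∩ Ioi (β - g)) ≤ volume (B ∩ Ioo (β - g) b₁) + volume ({b₁} : Set ℝ) :=
            (measure_mono hsub).trans (measure_union_le _ _)
        _ = volume (B ∩ Ioo (β - g) b₁) := by rw [Real.volume_singleton, add_zero]
    -- put everything together
    have main : volume A + (volume B + volume (B ∩ Ioc (β - g) β)) ≤ volume A + volume B := by
      calc volume A + (volume B + volume (B ∩ Ioc (β - g) β))
          = volume (A ∩ Iic c) + volume (A ∩ Ici d)
            + (volume (B ∩ Iic β) + volume (B ∩ Ioi (β - g))) := by rw [hAsplit, hBsplit]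
        _ ≤ volume (A ∩ Iic c) + volume (A ∩ Ici d)
            + (volume (B ∩ Ioc b₀ β) + volume (B ∩ Ioo (β - g) b₁)) := by
              exact add_le_add_right (add_le_add h2b h3b) _
        _ = volume (S₁ ∪ S₂ ∪ S₃ ∪ S₄) := by rw [hvol_union]; ring
        _ ≤ volume (A + B) := hunion_le
        _ = volume A + volume B := heq
    have hfin : volume A + volume B ≠ ⊤ :=
      (ENNReal.add_lt_top.mpr ⟨hAc.measure_lt_top, hBc.measure_lt_top⟩).ne
    have := (ENNReal.add_le_add_iff_left hfin).mp (by
      calc volume A + volume B + volume (B ∩ Ioc (β - g) β)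
          = volume A + (volume B + volume (B ∩ Ioc (β - g) β)) := by ring
        _ ≤ volume A + volume B := main
        _ = volume A + volume B + 0 := by rw [add_zero])
    exact le_antisymm this zero_le
  -- cover B by the little windows
  have hz : ∀ n : ℕ, volume (B ∩ Ioc (b₀ + n * g) (b₀ + n * g + g)) = 0 := by
    intro n
    have := key (b₀ + (n : ℝ) * g + g)
    rw [show b₀ + (n : ℝ) * g + g - g = b₀ + (n : ℝ) * g by ring] at this
    exact this
  have cover : B ⊆ {b₀} ∪ ⋃ n : ℕ, (B ∩ Ioc (b₀ + n * g) (b₀ + n * g + g)) := by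
    intro x hx
    rcases eq_or_lt_of_le (hb₀ _ hx) with h | h
    · exact Or.inl (by simp [← h])
    · right
      have hpos : 0 < (x - b₀) / g := div_pos (by linarith) hg0
      set m := ⌈(x - b₀) / g⌉₊ with hm
      have hm1 : 1 ≤ m := by
        rw [hm, Nat.one_le_iff_ne_zero]
        simp only [Ne, Nat.ceil_eq_zero, not_le]
        exact hpos
      have hc1 : ((m - 1 : ℕ) : ℝ) < (x - b₀) / g := Nat.lt_ceil.mp (by omega)
      have hc2 : (x - b₀) / g ≤ ((m - 1 : ℕ) : ℝ) + 1 := by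
        have h1 := Nat.le_ceil ((x - b₀) / g)
        have h2 : ((m - 1 : ℕ) : ℝ) + 1 = (m : ℝ) := by
          push_cast [Nat.cast_sub hm1]
          ring
        rw [h2]
        exact h1
      have hl1 : ((m - 1 : ℕ) : ℝ) * g < x - b₀ := (lt_div_iff₀ hg0).mp hc1
      have hl2 : x - b₀ ≤ (((m - 1 : ℕ) : ℝ) + 1) * g := (div_le_iff₀ hg0).mp hc2
      refine mem_iUnion.mpr ⟨m - 1, hx, by linarith, by nlinarith⟩
  have : volume ({b₀} ∪ ⋃ n : ℕ, (B ∩ Ioc (b₀ + n * g) (b₀ + n * g + g)) : Set ℝ) = 0 :=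
    measure_union_null (by simp) (measure_iUnion_null hz)
  exact measure_mono_null cover this

private lemma interval_or_gap (A : Set ℝ) (hA : A.Nonempty) (hAc : IsCompact A) :
    A = Icc (sInf A) (sSup A) ∨ ∃ c d, c ∈ A ∧ d ∈ A ∧ c < d ∧ A ∩ Ioo c d = ∅ := by
  by_cases h : Icc (sInf A) (sSup A) ⊆ A
  · left
    refine le_antisymm (fun x hx => ?_) h
    exact ⟨csInf_le hAc.bddBelow hx, le_csSup hAc.bddAbove hx⟩
  · right
    obtain ⟨x, hxI, hxA⟩ := not_subset.mp h
    have hx1 : sInf A ≤ x := hxI.1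
    have hx2 : x ≤ sSup A := hxI.2
    have hne1 : (A ∩ Iic x).Nonempty := ⟨sInf A, hAc.sInf_mem hA, hx1⟩
    have hne2 : (A ∩ Ici x).Nonempty := ⟨sSup A, hAc.sSup_mem hA, hx2⟩
    have hcpt1 : IsCompact (A ∩ Iic x) := hAc.inter_right isClosed_Iic
    have hcpt2 : IsCompact (A ∩ Ici x) := hAc.inter_right isClosed_Ici
    set c := sSup (A ∩ Iic x) with hcdef
    set d := sInf (A ∩ Ici x) with hddef
    have hcmem : c ∈ A ∩ Iic x := hcpt1.sSup_mem hne1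
    have hdmem : d ∈ A ∩ Ici x := hcpt2.sInf_mem hne2
    have hcx : c < x := lt_of_le_of_ne hcmem.2 (fun h => hxA (h ▸ hcmem.1))
    have hdx : x < d := lt_of_le_of_ne (le_of_eq rfl |>.trans hdmem.2)
      (fun h => hxA (h ▸ hdmem.1))
    refine ⟨c, d, hcmem.1, hdmem.1, hcx.trans hdx, ?_⟩
    rw [Set.eq_empty_iff_forall_notMem]
    rintro y ⟨hyA, hy1, hy2⟩
    rcases le_total y x with hyx | hyx
    · have : y ≤ c := le_csSup hcpt1.bddAbove ⟨hyA, hyx⟩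
      linarith
    · have : d ≤ y := csInf_le hcpt2.bddBelow ⟨hyA, hyx⟩
      linarith

theorem bml_one_dim_equality (A B : Set ℝ) (hA : A.Nonempty) (hB : B.Nonempty)
    (hAc : IsCompact A) (hBc : IsCompact B) (hpos : 0 < volume (A + B)) :
    volume (A + B) = volume A + volume B ↔
      ((∃ a, A = {a}) ∧ 0 < volume B) ∨
      ((∃ b, B = {b}) ∧ 0 < volume A) ∨
      ((∃ a b : ℝ, a < b ∧ A = Icc a b) ∧ (∃ c d : ℝ, c < d ∧ B = Icc c d)) := by
  constructor
  · intro heq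
    by_cases hA0 : volume A = 0
    · left
      have hvolAB : volume (A + B) = volume B := by rw [heq, hA0, zero_add]
      have hBpos : 0 < volume B := hvolAB ▸ hpos
      obtain ⟨a, ha⟩ := hA
      refine ⟨⟨a, ?_⟩, hBpos⟩
      ext x
      simp only [mem_singleton_iff]
      constructor
      · intro hx
        by_contra hne
        rcases lt_or_gt_of_ne hne with h | h
        · exact absurd (two_pts_aux A B hAc hBc hBpos hvolAB x a hx ha h) (fun t => t)
        · exact absurd (two_pts_aux A B hAc hBc hBpos hvolAB a x ha hx h) (fun t => t)
      · rintro rfl; exact ha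
    · by_cases hB0 : volume B = 0
      · right; left
        have hcomm : A + B = B + A := add_comm A B
        have hvolAB : volume (B + A) = volume A := by rw [← hcomm, heq, hB0, add_zero]
        have hApos : 0 < volume A := by
          rw [heq, hB0, add_zero] at hpos; exact hpos
        obtain ⟨b, hb⟩ := hB
        refine ⟨⟨b, ?_⟩, hApos⟩
        ext x
        simp only [mem_singleton_iff]
        constructor
        · intro hx
          by_contra hne
          rcases lt_or_gt_of_ne hne with h | h
          · exact absurd (two_pts_aux B A hBc hAc hApos hvolAB x b hx hb h) (fun t => t)
          · exact absurd (two_pts_aux B A hBc hAc hApos hvolAB b x hb hx h) (fun t => t)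
        · rintro rfl; exact hb
      · right; right
        constructor
        · rcases interval_or_gap A hA hAc with hI | ⟨c, d, hc, hd, hcd, hgap⟩
          · have hlt : sInf A < sSup A := by
              by_contra hlt
              apply hA0
              rw [hI, Real.volume_Icc, ENNReal.ofReal_eq_zero]
              linarith [not_lt.mp hlt]
            exact ⟨_, _, hlt, hI⟩
          · exact absurd (gap_null A B hB hAc hBc c d hc hd hcd hgap heq) hB0
        · rcases interval_or_gap B hB hBc with hI | ⟨c, d, hc, hd, hcd, hgap⟩
          · have hlt : sInf B < sSup B := by
              by_contra hlt
              apply hB0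
              rw [hI, Real.volume_Icc, ENNReal.ofReal_eq_zero]
              linarith [not_lt.mp hlt]
            exact ⟨_, _, hlt, hI⟩
          · have heq' : volume (B + A) = volume B + volume A := by
              rw [add_comm B A, heq, add_comm (volume A)]
            exact absurd (gap_null B A hA hBc hAc c d hc hd hcd hgap heq') hA0
  · rintro (⟨⟨a, rfl⟩, hBpos⟩ | ⟨⟨b, rfl⟩, hApos⟩ | ⟨⟨a, b, hab, rfl⟩, ⟨c, d, hcd, rfl⟩⟩)
    · simp [Set.singleton_add, measure_preimage_add, Real.volume_singleton]
    · simp [Set.add_singleton, measure_preimage_add_right, Real.volume_singleton]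
    · rw [Icc_add_Icc hab.le hcd.le, Real.volume_Icc, Real.volume_Icc, Real.volume_Icc,
        ← ENNReal.ofReal_add (by linarith) (by linarith)]
      congr 1
      ring
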